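/- arXiv:1405.0424 — 2 statements merged into one kernel-verified Lean document; each statement's English description precedes it below -/
import Mathlib

section
/- Let T be a universal co-Büchi tree automaton over Σ with n states and λ a strategy represented by a Moore machine M_λ with m states, generating the complete Σ-labelled D-tree T_λ. Then T_λ ∈ L_uc(T) if and only if T_λ ∈ L_{uc,2nm}(T). -/
open Classical

noncomputable section

/-! ## Environment models (Section 2 of the paper) -/

/-- An environment model `M_E = (P, Σ1, Σ2, S_e, S_0, Δ_e, τ_e)` together with the
set `P_v` of visible propositions (the invisible ones being its complement). -/
structure EnvModel (P σ1 σ2 S : Type) where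
  Pv : Set P
  S0 : Set S
  lab : S → Set P
  trans : S → σ1 → σ2 → S → Prop

namespace EnvModel

variable {P σ1 σ2 S 𝕂 : Type}

/-- The model is deadlock-free. -/
def DeadlockFree (M : EnvModel P σ1 σ2 S) : Prop :=
  ∀ s : S, ∃ a1 a2 s', M.trans s a1 a2 s'

/-- The model is complete for all actions of the system. -/
def SysComplete (M : EnvModel P σ1 σ2 S) : Prop :=
  ∀ (s : S) (a1 : σ1), ∃ a2 s', M.trans s a1 a2 s'

/-- Visible part of the label of a state. -/
def vlab (M : EnvModel P σ1 σ2 S) (s : S) : Set P := M.lab s ∩ M.Pv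

/-- The observation (indistinguishability class) of a state. -/
def obsOf (M : EnvModel P σ1 σ2 S) (s : S) : Set S := {s' | M.vlab s' = M.vlab s}

/-- The set `O` of observations, as a type. -/
def Obs (M : EnvModel P σ1 σ2 S) : Type := {o : Set S // ∃ s, o = M.obsOf s}

/-- The observation of a state, as an element of `Obs`. -/
def obs (M : EnvModel P σ1 σ2 S) (s : S) : M.Obs := ⟨M.obsOf s, s, rfl⟩

/-- The executions of the environment model. -/
def exec (M : EnvModel P σ1 σ2 S) : Set (ℕ → S) :=
  {ρ | ρ 0 ∈ M.S0 ∧ ∀ i, ∃ a1 a2, M.trans (ρ i) a1 a2 (ρ (i + 1))}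

/-- Indistinguishability of executions up to position `i` (`ρ ∼_i ρ'`). -/
def simUpTo (M : EnvModel P σ1 σ2 S) (i : ℕ) (ρ ρ' : ℕ → S) : Prop :=
  ∀ j ≤ i, M.vlab (ρ j) = M.vlab (ρ' j)

end EnvModel

/-! ## KLTL syntax and semantics -/

/-- KLTL formulas over atomic propositions `P` (with the derived operators
`∧` and `□` taken as primitive, as used in the grammar of KLTL⁺). -/
inductive KLTL (P : Type) : Type
  | atom : P → KLTL P
  | not : KLTL P → KLTL P
  | and : KLTL P → KLTL P → KLTL P
  | or : KLTL P → KLTL P → KLTL P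
  | next : KLTL P → KLTL P
  | always : KLTL P → KLTL P
  | untl : KLTL P → KLTL P → KLTL P
  | know : KLTL P → KLTL P

namespace KLTL

variable {P P' A : Type}

/-- Generic KLTL semantics: sequences over `A`, labelled by `lab`, with
indistinguishability-up-to-`i` relations `sim i`.  `R` is the ambient set of
executions used to interpret the knowledge operator. -/
def sat (lab : A → Set P) (sim : ℕ → (ℕ → A) → (ℕ → A) → Prop)
    (R : Set (ℕ → A)) : KLTL P → (ℕ → A) → ℕ → Prop
  | atom p, ρ, i => p ∈ lab (ρ i)
  | not φ, ρ, i => ¬ sat lab sim R φ ρ i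
  | and φ ψ, ρ, i => sat lab sim R φ ρ i ∧ sat lab sim R ψ ρ i
  | or φ ψ, ρ, i => sat lab sim R φ ρ i ∨ sat lab sim R ψ ρ i
  | next φ, ρ, i => sat lab sim R φ ρ (i + 1)
  | always φ, ρ, i => ∀ j, i ≤ j → sat lab sim R φ ρ j
  | untl φ ψ, ρ, i =>
      ∃ j, i ≤ j ∧ sat lab sim R ψ ρ j ∧ ∀ k, i ≤ k → k < j → sat lab sim R φ ρ k
  | know φ, ρ, i => ∀ ρ' ∈ R, sim i ρ ρ' → sat lab sim R φ ρ' i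

/-- The positive fragment KLTL⁺: `φ ::= p | ¬p | φ∧φ | φ∨φ | ○φ | □φ | Kφ | φ U φ`. -/
inductive IsPositive : KLTL P → Prop
  | atom (p : P) : IsPositive (atom p)
  | natom (p : P) : IsPositive (not (atom p))
  | and {φ ψ} : IsPositive φ → IsPositive ψ → IsPositive (and φ ψ)
  | or {φ ψ} : IsPositive φ → IsPositive ψ → IsPositive (or φ ψ)
  | next {φ} : IsPositive φ → IsPositive (next φ)
  | always {φ} : IsPositive φ → IsPositive (always φ)
  | untl {φ ψ} : IsPositive φ → IsPositive ψ → IsPositive (untl φ ψ)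
  | know {φ} : IsPositive φ → IsPositive (know φ)

/-- LTL formulas are the KLTL formulas without the knowledge operator. -/
inductive NoKnow : KLTL P → Prop
  | atom (p : P) : NoKnow (atom p)
  | not {φ} : NoKnow φ → NoKnow (not φ)
  | and {φ ψ} : NoKnow φ → NoKnow ψ → NoKnow (and φ ψ)
  | or {φ ψ} : NoKnow φ → NoKnow ψ → NoKnow (or φ ψ)
  | next {φ} : NoKnow φ → NoKnow (next φ)
  | always {φ} : NoKnow φ → NoKnow (always φ)
  | untl {φ ψ} : NoKnow φ → NoKnow ψ → NoKnow (untl φ ψ)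

/-- Subformula relation. -/
inductive Subf : KLTL P → KLTL P → Prop
  | refl (φ) : Subf φ φ
  | not {ψ φ} : Subf ψ φ → Subf ψ (not φ)
  | andL {ψ φ1 φ2} : Subf ψ φ1 → Subf ψ (and φ1 φ2)
  | andR {ψ φ1 φ2} : Subf ψ φ2 → Subf ψ (and φ1 φ2)
  | orL {ψ φ1 φ2} : Subf ψ φ1 → Subf ψ (or φ1 φ2)
  | orR {ψ φ1 φ2} : Subf ψ φ2 → Subf ψ (or φ1 φ2)
  | next {ψ φ} : Subf ψ φ → Subf ψ (next φ)
  | always {ψ φ} : Subf ψ φ → Subf ψ (always φ)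
  | untlL {ψ φ1 φ2} : Subf ψ φ1 → Subf ψ (untl φ1 φ2)
  | untlR {ψ φ1 φ2} : Subf ψ φ2 → Subf ψ (untl φ1 φ2)
  | know {ψ φ} : Subf ψ φ → Subf ψ (know φ)

/-- Size of a formula. -/
def size : KLTL P → ℕ
  | atom _ => 1
  | not φ => φ.size + 1
  | and φ ψ => φ.size + ψ.size + 1
  | or φ ψ => φ.size + ψ.size + 1
  | next φ => φ.size + 1
  | always φ => φ.size + 1
  | untl φ ψ => φ.size + ψ.size + 1
  | know φ => φ.size + 1

/-- Renaming of atomic propositions. -/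
def map (f : P → P') : KLTL P → KLTL P'
  | atom p => atom (f p)
  | not φ => not (φ.map f)
  | and φ ψ => and (φ.map f) (ψ.map f)
  | or φ ψ => or (φ.map f) (ψ.map f)
  | next φ => next (φ.map f)
  | always φ => always (φ.map f)
  | untl φ ψ => untl (φ.map f) (ψ.map f)
  | know φ => know (φ.map f)

/-- LTL satisfaction of a (K-free) formula on an infinite word over `2^P`
(the knowledge operator, which does not occur in LTL formulas, is interpreted
trivially over the singleton set of executions `{w}`). -/
def satW (φ : KLTL P) (w : ℕ → Set P) (i : ℕ) : Prop :=
  sat (fun x : Set P => x) (fun _ _ _ => True) {w} φ w i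

end KLTL

/-! ## Automata on infinite words and trees -/

/-- Universal co-Büchi word automaton. -/
structure UCW (Al Q : Type) where
  init : Set Q
  final : Set Q
  delta : Q → Al → Set Q

namespace UCW

variable {Al Q : Type}

def Complete (A : UCW Al Q) : Prop := ∀ q σ, (A.delta q σ).Nonempty

/-- Language with the universal co-Büchi condition, starting from the states `Q0`. -/
def LucFrom (A : UCW Al Q) (Q0 : Set Q) : Set (ℕ → Al) :=
  {w | ∀ q : ℕ → Q, q 0 ∈ Q0 → (∀ i, q (i + 1) ∈ A.delta (q i) (w i)) →
    {i | q i ∈ A.final}.Finite}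

/-- Language with the universal co-Büchi acceptance condition. -/
def Luc (A : UCW Al Q) : Set (ℕ → Al) := A.LucFrom A.init

end UCW

/-- The prefix of length `i` of an infinite sequence of directions. -/
def prefixOf {D : Type} (ds : ℕ → D) (i : ℕ) : List D :=
  List.ofFn (fun j : Fin i => ds j)

/-- Universal co-Büchi tree automaton, running on complete `Al`-labelled `D`-trees
(identified with functions `List D → Al`). -/
structure UCT (Al Q D : Type) where
  init : Set Q
  final : Set Q
  delta : Q → Al → D → Set Q

namespace UCT

variable {Al Q D : Type}

/-- Language with the universal co-Büchi condition: every branch of the (unique)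
run visits final states finitely often. -/
def Luc (A : UCT Al Q D) : Set (List D → Al) :=
  {t | ∀ (q : ℕ → Q) (ds : ℕ → D), q 0 ∈ A.init →
    (∀ i, q (i + 1) ∈ A.delta (q i) (t (prefixOf ds i)) (ds i)) →
    {i | q i ∈ A.final}.Finite}

/-- Language with the universal `B`-co-Büchi condition: every branch of the run
visits final states at most `B` times. -/
def LucB (A : UCT Al Q D) (B : ℕ) : Set (List D → Al) :=
  {t | ∀ (q : ℕ → Q) (ds : ℕ → D), q 0 ∈ A.init →
    (∀ i, q (i + 1) ∈ A.delta (q i) (t (prefixOf ds i)) (ds i)) →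
    {i | q i ∈ A.final}.Finite ∧ {i | q i ∈ A.final}.ncard ≤ B}

def Deterministic (A : UCT Al Q D) : Prop :=
  (∃ q0, A.init = {q0}) ∧ ∀ q σ d, (A.delta q σ d).Subsingleton

def Complete (A : UCT Al Q D) : Prop :=
  A.init.Nonempty ∧ ∀ q σ d, (A.delta q σ d).Nonempty

/-- `RunReach A t os q` holds iff some finite branch of the run of `A` on the
tree `t`, following the sequence of directions `os`, ends in state `q`. -/
inductive RunReach (A : UCT Al Q D) (t : List D → Al) : List D → Q → Prop
  | base {q} : q ∈ A.init → RunReach A t [] q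
  | step {os q q' o} : RunReach A t os q → q' ∈ A.delta q (t os) o →
      RunReach A t (os ++ [o]) q'

end UCT

/-! ## Strategies and realizability -/

namespace EnvModel

variable {P σ1 σ2 S 𝕂 : Type}

/-- KLTL satisfaction over a set `R` of executions of the model. -/
def ksat (M : EnvModel P σ1 σ2 S) (R : Set (ℕ → S)) (φ : KLTL P) (ρ : ℕ → S) (i : ℕ) : Prop :=
  KLTL.sat M.lab M.simUpTo R φ ρ i

/-- `M_E ⊨ φ`. -/
def Models (M : EnvModel P σ1 σ2 S) (φ : KLTL P) : Prop :=
  ∀ ρ ∈ M.exec, M.ksat M.exec φ ρ 0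

/-- The executions of `M` compatible with a strategy (generic in the action
alphabet `α`, to cover both plain strategies and extended ones). -/
def execWithGen {α : Type} (M : EnvModel P σ1 σ2 S) (proj : α → σ1)
    (lam : List (α × M.Obs) → α) : Set (ℕ → S) :=
  {ρ | ρ ∈ M.exec ∧ ∃ a : ℕ → α × σ2,
    (∀ i, M.trans (ρ i) (proj (a i).1) (a i).2 (ρ (i + 1))) ∧
    (∀ i, (a i).1 = lam (List.ofFn (fun j : Fin i => ((a j).1, M.obs (ρ j)))))}

/-- The executions of `M` compatible with a strategy `λ : (Σ1·O)* → Σ1`. -/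
def execWith (M : EnvModel P σ1 σ2 S) (lam : List (σ1 × M.Obs) → σ1) : Set (ℕ → S) :=
  M.execWithGen id lam

/-- The strategy `λ` realizes the KLTL formula `φ` in `M`. -/
def Realizes (M : EnvModel P σ1 σ2 S) (φ : KLTL P) (lam : List (σ1 × M.Obs) → σ1) : Prop :=
  ∀ ρ ∈ M.execWith lam, M.ksat (M.execWith lam) φ ρ 0

/-- `φ` is realizable in `M`. -/
def Realizable (M : EnvModel P σ1 σ2 S) (φ : KLTL P) : Prop :=
  ∃ lam, M.Realizes φ lam

/-- The strategy `λ` realizes the LTL formula `ψ` in `M` (LTL semantics on traces). -/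
def RealizesLTL (M : EnvModel P σ1 σ2 S) (ψ : KLTL P) (lam : List (σ1 × M.Obs) → σ1) : Prop :=
  ∀ ρ ∈ M.execWith lam, KLTL.satW ψ (fun i => M.lab (ρ i)) 0

/-- The strategy associated with a complete `α`-labelled `O`-tree. -/
def stratOf {α : Type} (M : EnvModel P σ1 σ2 S) (t : List M.Obs → α) :
    List (α × M.Obs) → α :=
  fun h => t (h.map Prod.snd)

/-! ## The LTL-to-UCT construction (Section 4) -/

/-- `post_a(I,o)`. -/
def post (M : EnvModel P σ1 σ2 S) (a : σ1) (I : Set S) (o : Set S) : Set S :=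
  {s | s ∈ o ∧ ∃ a2, ∃ s' ∈ I, M.trans s' a a2 s}

/-- `I_{q,q'}` for a word automaton `A` over `2^P`. -/
def Iqq {QA : Type} (M : EnvModel P σ1 σ2 S) (A : UCW (Set P) QA) (I : Set S)
    (q q' : QA) : Set S :=
  {s ∈ I | q' ∈ A.delta q (M.lab s)}

/-- The UCT associated with an environment model and a UCW for an LTL formula;
`none` plays the role of the extra (absorbing) state `(q_w, ∅)`. -/
def ltlToUCT {QA : Type} (M : EnvModel P σ1 σ2 S) (A : UCW (Set P) QA) :
    UCT σ1 (Option (QA × Set S)) M.Obs where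
  init := {x | ∃ q0 ∈ A.init, x = some (q0, M.S0)}
  final := {x | ∃ q I, q ∈ A.final ∧ x = some (q, I)}
  delta := fun x a o =>
    match x with
    | none => {none}
    | some (q, I) =>
      if M.post a I o.val = ∅ then {none}
      else {x' | ∃ q', (∃ s ∈ I, q' ∈ A.delta q (M.lab s)) ∧
            x' = some (q', M.post a (M.Iqq A I q q') o.val)}

/-! ## Extended actions, executions and strategies (Section 5) -/

/-- Extended labelling `τ_e'(s,K) = τ_e(s) ∪ K` over `P' = P ⊕ 𝕂`. -/
def elabE (M : EnvModel P σ1 σ2 S) (s : S) (K : Set 𝕂) : Set (P ⊕ 𝕂) :=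
  (Sum.inl '' M.lab s) ∪ (Sum.inr '' K)

/-- Extended labelling as a function on pairs. -/
def elabP (M : EnvModel P σ1 σ2 S) (x : S × Set 𝕂) : Set (P ⊕ 𝕂) :=
  M.elabE x.1 x.2

/-- Indistinguishability of e-executions up to position `i`: the state parts are
`∼_i`-related and the (visible) 𝕂-parts agree. -/
def esim (M : EnvModel P σ1 σ2 S) (i : ℕ) (ρ ρ' : ℕ → S × Set 𝕂) : Prop :=
  (∀ j ≤ i, M.vlab (ρ j).1 = M.vlab (ρ' j).1) ∧ (∀ j ≤ i, (ρ j).2 = (ρ' j).2)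

/-- KLTL satisfaction over a set of e-executions. -/
def esat (M : EnvModel P σ1 σ2 S) (R : Set (ℕ → S × Set 𝕂)) (φ : KLTL (P ⊕ 𝕂))
    (ρ : ℕ → S × Set 𝕂) (i : ℕ) : Prop :=
  KLTL.sat M.elabP M.esim R φ ρ i

/-- The e-executions compatible with an e-strategy `λ' : (Σ1'·O)* → Σ1'`. -/
def execWithE (M : EnvModel P σ1 σ2 S)
    (lam : List ((σ1 × Set 𝕂) × M.Obs) → σ1 × Set 𝕂) : Set (ℕ → S × Set 𝕂) :=
  {ρ | (fun i => (ρ i).1) ∈ M.exec ∧ ∃ a : ℕ → (σ1 × Set 𝕂) × σ2,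
    (∀ i, M.trans (ρ i).1 (a i).1.1 (a i).2 (ρ (i + 1)).1) ∧
    (∀ i, (ρ i).2 = (a i).1.2) ∧
    (∀ i, (a i).1 = lam (List.ofFn (fun j : Fin i => ((a j).1, M.obs (ρ j).1))))}

/-- The e-strategy `λ'` realizes the formula `ψ` over `P' = P ⊕ 𝕂` in `M`. -/
def RealizesE (M : EnvModel P σ1 σ2 S) (ψ : KLTL (P ⊕ 𝕂))
    (lam : List ((σ1 × Set 𝕂) × M.Obs) → σ1 × Set 𝕂) : Prop :=
  ∀ ρ ∈ M.execWithE lam, M.esat (M.execWithE lam) ψ ρ 0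

/-! ## Branches of strategy trees and their compatible executions -/

/-- The executions compatible with the infinite branch of the `Σ1`-labelled
`O`-tree `t` following the directions `ds` (the set `exec(M_E, τ(π))`). -/
def branchExec (M : EnvModel P σ1 σ2 S) (t : List M.Obs → σ1) (ds : ℕ → M.Obs) :
    Set (ℕ → S) :=
  {ρ | ρ ∈ M.exec ∧
    (∀ i, M.obsOf (ρ (i + 1)) = (ds i).val) ∧
    (∀ i, ∃ b, M.trans (ρ i) (t (prefixOf ds i)) b (ρ (i + 1)))}

/-- `R⟨π⟩`: the e-executions compatible with the branch of the
`Σ1'`-labelled `O`-tree `t` following the directions `ds`. -/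
def branchExecE (M : EnvModel P σ1 σ2 S) (t : List M.Obs → σ1 × Set 𝕂)
    (ds : ℕ → M.Obs) : Set (ℕ → S × Set 𝕂) :=
  {ρ | (fun i => (ρ i).1) ∈ M.exec ∧
    (∀ i, M.obsOf (ρ (i + 1)).1 = (ds i).val) ∧
    (∀ i, ∃ b, M.trans (ρ i).1 (t (prefixOf ds i)).1 b (ρ (i + 1)).1) ∧
    (∀ i, (ρ i).2 = (t (prefixOf ds i)).2)}

/-- `R⟨T,π,j⟩`: union of `R⟨π'⟩` over branches `π'` agreeing with `π` up to `j`. -/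
def branchSetE (M : EnvModel P σ1 σ2 S) (t : List M.Obs → σ1 × Set 𝕂)
    (ds : ℕ → M.Obs) (j : ℕ) : Set (ℕ → S × Set 𝕂) :=
  ⋃ ds' ∈ {ds' : ℕ → M.Obs | ∀ l < j, ds' l = ds l}, M.branchExecE t ds'

/-- `T` is fair with respect to `φ` (with `name k` the formula `γ` named by `k_γ`). -/
def Fair (M : EnvModel P σ1 σ2 S) (t : List M.Obs → σ1 × Set 𝕂)
    (name : 𝕂 → KLTL (P ⊕ 𝕂)) (φ : KLTL (P ⊕ 𝕂)) : Prop :=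
  ∀ (ds : ℕ → M.Obs) (j : ℕ) (k : 𝕂),
    k ∈ (t (prefixOf ds j)).2 →
    KLTL.Subf (KLTL.atom (Sum.inr k)) φ →
    ∀ ds' : ℕ → M.Obs, (∀ l < j, ds' l = ds l) →
    ∀ ρ ∈ M.branchExecE t ds',
      M.esat (M.branchExecE t ds') (name k) ρ j

/-! ## The extended LTL-to-UCT construction and the chain `T^d, …, T^0` -/

/-- `I_{q,q'}` for extended labels. -/
def eIqq {QW : Type} (M : EnvModel P σ1 σ2 S) (A : UCW (Set (P ⊕ 𝕂)) QW) (K : Set 𝕂)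
    (I : Set S) (q q' : QW) : Set S :=
  {s ∈ I | q' ∈ A.delta q (M.elabE s K)}

/-- Transition function of the LTL-to-UCT construction over extended actions. -/
def eDelta {QW : Type} (M : EnvModel P σ1 σ2 S) (A : UCW (Set (P ⊕ 𝕂)) QW) :
    Option (QW × Set S) → σ1 × Set 𝕂 → M.Obs → Set (Option (QW × Set S)) :=
  fun x aK o =>
    match x with
    | none => {none}
    | some (q, I) =>
      if M.post aK.1 I o.val = ∅ then {none}
      else {x' | ∃ q', (∃ s ∈ I, q' ∈ A.delta q (M.elabE s aK.2)) ∧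
            x' = some (q', M.post aK.1 (M.eIqq A aK.2 I q q') o.val)}

/-- The LTL-to-UCT construction over extended actions, with designated initial
word-automaton states `Q0`. -/
def ltlToUCTe {QW : Type} (M : EnvModel P σ1 σ2 S) (A : UCW (Set (P ⊕ 𝕂)) QW)
    (Q0 : Set QW) : UCT (σ1 × Set 𝕂) (Option (QW × Set S)) M.Obs where
  init := {x | ∃ q0 ∈ Q0, x = some (q0, M.S0)}
  final := {x | ∃ q I, q ∈ A.final ∧ x = some (q, I)}
  delta := M.eDelta A

end EnvModel

/-- One step of rewriting: `InnerRepl name φ φ'` holds iff `φ'` is obtained from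
`φ` by replacing each innermost subformula `K γ` by the fresh atomic
proposition `k_γ` (an atom `Sum.inr k` with `name k = γ`). -/
inductive InnerRepl {P 𝕂 : Type} (name : 𝕂 → KLTL (P ⊕ 𝕂)) :
    KLTL (P ⊕ 𝕂) → KLTL (P ⊕ 𝕂) → Prop
  | atom (p) : InnerRepl name (.atom p) (.atom p)
  | not {φ φ'} : InnerRepl name φ φ' → InnerRepl name (.not φ) (.not φ')
  | and {φ1 φ2 φ1' φ2'} : InnerRepl name φ1 φ1' → InnerRepl name φ2 φ2' →
      InnerRepl name (.and φ1 φ2) (.and φ1' φ2')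
  | or {φ1 φ2 φ1' φ2'} : InnerRepl name φ1 φ1' → InnerRepl name φ2 φ2' →
      InnerRepl name (.or φ1 φ2) (.or φ1' φ2')
  | next {φ φ'} : InnerRepl name φ φ' → InnerRepl name (.next φ) (.next φ')
  | always {φ φ'} : InnerRepl name φ φ' → InnerRepl name (.always φ) (.always φ')
  | untl {φ1 φ2 φ1' φ2'} : InnerRepl name φ1 φ1' → InnerRepl name φ2 φ2' →
      InnerRepl name (.untl φ1 φ2) (.untl φ1' φ2')
  | knowInner {γ : KLTL (P ⊕ 𝕂)} {k : 𝕂} : γ.NoKnow → name k = γ →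
      InnerRepl name (.know γ) (.atom (Sum.inr k))
  | knowOuter {γ γ'} : ¬ γ.NoKnow → InnerRepl name γ γ' →
      InnerRepl name (.know γ) (.know γ')

/-- `ψ⁻¹`: replace each atomic proposition `k_γ` by the formula `K γ`. -/
def KLTL.unrepl {P 𝕂 : Type} (name : 𝕂 → KLTL (P ⊕ 𝕂)) : KLTL (P ⊕ 𝕂) → KLTL (P ⊕ 𝕂)
  | .atom (Sum.inl p) => .atom (Sum.inl p)
  | .atom (Sum.inr k) => .know (name k)
  | .not φ => .not (unrepl name φ)
  | .and φ ψ => .and (unrepl name φ) (unrepl name ψ)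
  | .or φ ψ => .or (unrepl name φ) (unrepl name ψ)
  | .next φ => .next (unrepl name φ)
  | .always φ => .always (unrepl name φ)
  | .untl φ ψ => .untl (unrepl name φ) (unrepl name ψ)
  | .know φ => .know (unrepl name φ)

/-- `ChainStep M W initγ φnext Tnext Tcur`: `Tcur` (the automaton `T^i`) is
obtained from `Tnext` (the automaton `T^{i+1}`) by adding, for every transition
source `(q,I)` with extended action `(a,K)` and observation `o` and every
`k_γ ∈ K` occurring in `φ^{i+1} = φnext`, the transitions of the automaton
`T_{γ,I}` from its initial state `(q_0^γ, I)`. -/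
def ChainStep {P σ1 σ2 S 𝕂 QW : Type} (M : EnvModel P σ1 σ2 S)
    (W : UCW (Set (P ⊕ 𝕂)) QW) (initγ : 𝕂 → QW) (φnext : KLTL (P ⊕ 𝕂))
    (Tnext Tcur : UCT (σ1 × Set 𝕂) (Option (QW × Set S)) M.Obs) : Prop :=
  Tcur.init = Tnext.init ∧ Tcur.final = Tnext.final ∧
  (∀ aK o, Tcur.delta none aK o = Tnext.delta none aK o) ∧
  ∀ (q : QW) (I : Set S) (aK : σ1 × Set 𝕂) (o : M.Obs),
    Tcur.delta (some (q, I)) aK o =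
      Tnext.delta (some (q, I)) aK o ∪
      ⋃ k ∈ {k : 𝕂 | k ∈ aK.2 ∧ KLTL.Subf (KLTL.atom (Sum.inr k)) φnext},
        M.eDelta W (some (initγ k, I)) aK o

/-- The data of the Safraless construction for a KLTL⁺ formula: the fresh
propositions `𝕂` (with `name k` the formula `γ` named by `k = k_γ`), a word
automaton `W` containing (disjointly) the UCWs for `φ^d` and for each `γ`,
with initial states `inits` (for `φ^d`) resp. `initγ k` (for `γ`), the
sequence of formulas `φ^0, …, φ^d` and the chain of tree automata `T^0, …, T^d`. -/
structure KChain {P σ1 σ2 S : Type} (M : EnvModel P σ1 σ2 S) (𝕂 QW : Type) where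
  name : 𝕂 → KLTL (P ⊕ 𝕂)
  W : UCW (Set (P ⊕ 𝕂)) QW
  inits : Set QW
  initγ : 𝕂 → QW
  d : ℕ
  φs : ℕ → KLTL (P ⊕ 𝕂)
  Ts : ℕ → UCT (σ1 × Set 𝕂) (Option (QW × Set S)) M.Obs

/-- The defining properties of the construction of the chain `T^d, …, T^0`
from a KLTL⁺ formula `φ` and an environment model. -/
structure KChain.Wf {P σ1 σ2 S 𝕂 QW : Type} {M : EnvModel P σ1 σ2 S}
    (C : KChain (σ1 := σ1) M 𝕂 QW) (φ : KLTL P) : Prop where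
  hφ0 : C.φs 0 = φ.map Sum.inl
  hstep : ∀ i < C.d, InnerRepl C.name (C.φs i) (C.φs (i + 1))
  hLTL : (C.φs C.d).NoKnow
  hleast : ∀ i < C.d, ¬ (C.φs i).NoKnow
  hWcomplete : C.W.Complete
  hWd : C.W.LucFrom C.inits = {w | KLTL.satW (C.φs C.d) w 0}
  hWγ : ∀ k : 𝕂, C.W.LucFrom {C.initγ k} = {w | KLTL.satW (C.name k) w 0}
  hTd : C.Ts C.d = M.ltlToUCTe C.W C.inits
  hTstep : ∀ i < C.d, ChainStep M C.W C.initγ (C.φs (i + 1)) (C.Ts (i + 1)) (C.Ts i)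

/-! ## Counting subset construction, determinization and the safety game -/

/-- Initial counting function `F_0` of `Det(T,B)`. -/
def countInit {Al Q D : Type} (A : UCT Al Q D) : Q → ℤ :=
  fun q => if q ∈ A.init then (if q ∈ A.final then 1 else 0) else -1

/-- Transition function of the counting subset construction (`δ` of `Det(T,B)`). -/
def countTrans {Al Q D : Type} [Fintype Q] (A : UCT Al Q D) (B : ℕ)
    (F : Q → ℤ) (σ : Al) (d : D) : Q → ℤ :=
  fun q' =>
    WithBot.unbotD (-1) (((Finset.univ : Finset Q).filter
        (fun q => q' ∈ A.delta q σ d ∧ F q ≠ -1)).image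
      (fun q => min ((B : ℤ) + 1) (F q + (if q' ∈ A.final then 1 else 0)))).max

/-- The determinization `Det(T,B)` of a UCT with the `B`-co-Büchi condition,
presented as a tree automaton. -/
def detUCT {Al Q D : Type} [Fintype Q] (A : UCT Al Q D) (B : ℕ) :
    UCT Al (Q → ℤ) D where
  init := {countInit A}
  final := {F | ∃ q, F q > (B : ℤ)}
  delta := fun F σ d => {countTrans A B F σ d}

/-- Actions played by a system strategy in the safety game `G(T,B)` against
the environment's choices of directions `ds` (plays are identified with their
sequences of action/direction choices, the game states being determined). -/
def gameActs {Al D : Type} (st : List (Al × D) → Al) (ds : ℕ → D) : ℕ → Al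
  | i => st (List.ofFn (fun j : Fin i => (gameActs st ds j.1, ds j.1)))
  termination_by i => i
  decreasing_by exact j.2

/-- The sequence of system states of `G(T,B)` in the play where the system uses
the strategy `st` and the environment chooses the directions `ds`. -/
def gameStates {Al Q D : Type} [Fintype Q] (A : UCT Al Q D) (B : ℕ)
    (st : List (Al × D) → Al) (ds : ℕ → D) : ℕ → (Q → ℤ)
  | 0 => countInit A
  | i + 1 => countTrans A B (gameStates A B st ds i) (gameActs st ds i) (ds i)

/-- The system strategy `st` is winning in the safety game `G(T,B)`: every play
consistent with it only visits safe states (never a state of `α'`). -/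
def GameWin {Al Q D : Type} [Fintype Q] (A : UCT Al Q D) (B : ℕ)
    (st : List (Al × D) → Al) : Prop :=
  ∀ (ds : ℕ → D) (i : ℕ) (q : Q), gameStates A B st ds i q ≤ (B : ℤ)

/-- States of the safety game `G(T,B)` reachable from the initial state. -/
inductive GReach {Al Q D : Type} [Fintype Q] (A : UCT Al Q D) (B : ℕ) : (Q → ℤ) → Prop
  | base : GReach A B (countInit A)
  | step {F σ d} : GReach A B F → GReach A B (countTrans A B F σ d)

/-! ## Moore machines -/

/-- A Moore machine reading directions in `D` and outputting letters in `Al`. -/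
structure Moore (Al D Mt : Type) where
  init : Mt
  step : Mt → D → Mt
  out : Mt → Al

/-- The complete `Al`-labelled `D`-tree generated by a Moore machine. -/
def Moore.tree {Al D Mt : Type} (Mm : Moore Al D Mt) : List D → Al :=
  fun ds => Mm.out (ds.foldl Mm.step Mm.init)

end


/-! ### Auxiliary material for Statement 11 -/

namespace MooreTreeAux

variable {Al D Mt : Type}

/-- Moore state after reading the prefix of length `i` of `ds`. -/
def mSt (Mm : Moore Al D Mt) (ds : ℕ → D) (i : ℕ) : Mt :=
  (prefixOf ds i).foldl Mm.step Mm.init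

lemma mSt_succ (Mm : Moore Al D Mt) (ds : ℕ → D) (i : ℕ) :
    mSt Mm ds (i + 1) = Mm.step (mSt Mm ds i) (ds i) := by
  unfold mSt prefixOf
  rw [List.ofFn_succ', List.concat_eq_append, List.foldl_append]
  simp

lemma tree_prefix (Mm : Moore Al D Mt) (ds : ℕ → D) (i : ℕ) :
    Mm.tree (prefixOf ds i) = Mm.out (mSt Mm ds i) := rfl

/-- Wrap `i` into the window `[a, a+p)` (identity below `a`). -/
def wrap (a p : ℕ) (i : ℕ) : ℕ := if i < a then i else a + (i - a) % p

lemma wrap_zero (a p : ℕ) : wrap a p 0 = 0 := by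
  unfold wrap
  split
  · rfl
  · have : a = 0 := by omega
    simp [this]

lemma succ_mod (p x : ℕ) (hp : 0 < p) :
    (x + 1) % p = x % p + 1 ∨ ((x + 1) % p = 0 ∧ x % p = p - 1) := by
  have h1 : x % p < p := Nat.mod_lt _ hp
  rcases Nat.lt_or_ge (x % p + 1) p with h | h
  · left
    conv_lhs => rw [← Nat.mod_add_div x p]
    rw [Nat.add_right_comm, Nat.add_mul_mod_self_left]
    exact Nat.mod_eq_of_lt h
  · right
    have hx : x % p = p - 1 := by omega
    refine ⟨?_, hx⟩
    conv_lhs => rw [← Nat.mod_add_div x p]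
    rw [Nat.add_right_comm, Nat.add_mul_mod_self_left, hx]
    have hpp : p - 1 + 1 = p := by omega
    rw [hpp, Nat.mod_self]

lemma wrap_succ {a b : ℕ} (hab : a < b) (i : ℕ) :
    wrap a (b - a) (i + 1) = wrap a (b - a) i + 1 ∨
      (wrap a (b - a) (i + 1) = a ∧ wrap a (b - a) i = b - 1) := by
  set p := b - a with hpdef
  have hp : 0 < p := by omega
  unfold wrap
  rcases lt_trichotomy (i + 1) a with h | h | h
  · left
    rw [if_pos h, if_pos (by omega)]
  · left
    rw [if_neg (by omega), if_pos (by omega)]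
    have h0 : i + 1 - a = 0 := by omega
    rw [h0, Nat.zero_mod]
    omega
  · rw [if_neg (by omega), if_neg (by omega)]
    have hi : i + 1 - a = (i - a) + 1 := by omega
    rw [hi]
    rcases succ_mod p (i - a) hp with h2 | ⟨h2, h3⟩
    · left
      rw [h2]
      omega
    · right
      rw [h2, h3]
      omega

lemma wrap_period (a : ℕ) {p : ℕ} (_hp : 0 < p) (k : ℕ) :
    wrap a p (a + k * p) = a := by
  unfold wrap
  rw [if_neg (by omega), Nat.add_sub_cancel_left, Nat.mul_mod_left, Nat.add_zero]

end MooreTreeAux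

/-! ### STATEMENT 11
Let `T` be a UCT over `Σ` with `n` states and `λ` a strategy represented by a
Moore machine `M_λ` with `m` states, generating the complete `Σ`-labelled
`D`-tree `T_λ`.  Then `T_λ ∈ L_uc(T)` iff `T_λ ∈ L_{uc,2nm}(T)`. -/
theorem moore_tree_accepted_iff_bounded
    {Al Q D Mt : Type} [Fintype Q] [Fintype Mt]
    (A : UCT Al Q D) (Mm : Moore Al D Mt) :
    Mm.tree ∈ A.Luc ↔
      Mm.tree ∈ A.LucB (2 * Fintype.card Q * Fintype.card Mt) := by
  classical
  open MooreTreeAux in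
  constructor
  · intro h q ds hq0 hstep
    have hfin := h q ds hq0 hstep
    refine ⟨hfin, ?_⟩
    by_contra hcard
    push_neg at hcard
    -- pigeonhole: find a < b with q a = q b, same Moore state, q a final
    have hle : Fintype.card Q * Fintype.card Mt < {i | q i ∈ A.final}.ncard := by
      have h1 : Fintype.card Q * Fintype.card Mt ≤
          2 * Fintype.card Q * Fintype.card Mt := by
        have := Nat.mul_le_mul_right (Fintype.card Mt)
          (Nat.le_mul_of_pos_left (Fintype.card Q) (by norm_num : (0:ℕ) < 2))
        simpa [Nat.mul_assoc] using this
      omega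
    obtain ⟨i, hi, j, hj, hij, heq⟩ :=
      Finset.exists_ne_map_eq_of_card_lt_of_maps_to
        (s := hfin.toFinset) (t := (Finset.univ : Finset (Q × Mt)))
        (f := fun i => (q i, mSt Mm ds i))
        (by
          rw [Finset.card_univ, Fintype.card_prod]
          exact (Set.ncard_eq_toFinset_card _ hfin) ▸ hle)
        (fun x _ => Finset.mem_univ _)
    -- WLOG i < j
    wlog hlt : i < j generalizing i j
    · exact this j hj i hi (Ne.symm hij) heq.symm (by omega)
    have hqab : q i = q j := congrArg Prod.fst heq
    have hmab : mSt Mm ds i = mSt Mm ds j := congrArg Prod.snd heq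
    have hfa : q i ∈ A.final := by simpa using hfin.mem_toFinset.mp hi
    set a := i
    set b := j
    have hp : 0 < b - a := by omega
    -- Moore states along the wrapped branch
    have mclaim : ∀ n, mSt Mm (ds ∘ wrap a (b - a)) n = mSt Mm ds (wrap a (b - a) n) := by
      intro n
      induction n with
      | zero =>
        rw [wrap_zero]
        rfl
      | succ n ih =>
        rw [mSt_succ, ih]
        simp only [Function.comp_apply]
        rcases wrap_succ hlt n with hc | ⟨hc1, hc2⟩
        · rw [hc, mSt_succ]
        · have hb : b = (b - 1) + 1 := by omega
          have hms := mSt_succ Mm ds (b - 1)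
          rw [← hb] at hms
          rw [hc1, hc2, hmab, hms]
    -- the wrapped branch is a run
    have hq0' : q (wrap a (b - a) 0) ∈ A.init := by rw [wrap_zero]; exact hq0
    have hstep' : ∀ n, q (wrap a (b - a) (n + 1)) ∈
        A.delta (q (wrap a (b - a) n))
          (Mm.tree (prefixOf (ds ∘ wrap a (b - a)) n)) ((ds ∘ wrap a (b - a)) n) := by
      intro n
      have htree : Mm.tree (prefixOf (ds ∘ wrap a (b - a)) n) =
          Mm.tree (prefixOf ds (wrap a (b - a) n)) := by
        rw [tree_prefix, tree_prefix, mclaim]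
      simp only [Function.comp_apply]
      rcases wrap_succ hlt n with hc | ⟨hc1, hc2⟩
      · rw [hc, htree]
        exact hstep (wrap a (b - a) n)
      · rw [hc1, htree, hc2, hqab]
        have hb : b = (b - 1) + 1 := by omega
        have hs := hstep (b - 1)
        rw [← hb] at hs
        exact hs
    have hfin' := h (fun n => q (wrap a (b - a) n)) (ds ∘ wrap a (b - a)) hq0' hstep'
    -- but the wrapped branch visits final states infinitely often
    have hinf : {n | q (wrap a (b - a) n) ∈ A.final}.Infinite := by
      apply Set.infinite_of_injective_forall_mem
        (f := fun k : ℕ => a + k * (b - a))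
      case hi =>
        intro k l hkl
        simp only at hkl
        exact Nat.eq_of_mul_eq_mul_right hp (by omega : k * (b - a) = l * (b - a))
      case hf =>
        intro k
        simp only [Set.mem_setOf_eq, wrap_period a hp k]
        exact hfa
    exact hinf hfin'
  · intro h q ds hq0 hstep
    exact (h q ds hq0 hstep).1
end

section
/- For every i ∈ {0,…,d}, every tree T ∈ L_uc(T^i), every branch π of T and every e-execution ρ ∈ R⟨π⟩: R⟨π⟩, ρ, 0 ⊨ φ^i. -/
open Classical

noncomputable section AuxProof

open KLTL

variable {P 𝕂 : Type}

/-- Shift lemma for LTL satisfaction on words. -/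
lemma satW_shift (ψ : KLTL P) (w : ℕ → Set P) (j : ℕ) :
    ∀ i, KLTL.satW ψ w (i + j) ↔ KLTL.satW ψ (fun n => w (n + j)) i := by
  induction ψ with
  | atom p => intro i; simp [KLTL.satW, KLTL.sat]
  | not ψ ih => intro i; simp only [KLTL.satW, KLTL.sat] at *; rw [ih i]
  | and ψ1 ψ2 ih1 ih2 =>
      intro i; simp only [KLTL.satW, KLTL.sat] at *; rw [ih1 i, ih2 i]
  | or ψ1 ψ2 ih1 ih2 =>
      intro i; simp only [KLTL.satW, KLTL.sat] at *; rw [ih1 i, ih2 i]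
  | next ψ ih =>
      intro i; simp only [KLTL.satW, KLTL.sat] at *
      rw [show i + j + 1 = (i + 1) + j by omega, ih (i + 1)]
  | always ψ ih =>
      intro i; simp only [KLTL.satW, KLTL.sat] at *
      constructor
      · intro h m hm
        exact (ih m).mp (h (m + j) (by omega))
      · intro h m hm
        have := (ih (m - j)).mpr (h (m - j) (by omega))
        rwa [show m - j + j = m by omega] at this
  | untl ψ1 ψ2 ih1 ih2 =>
      intro i; simp only [KLTL.satW, KLTL.sat] at *
      constructor
      · rintro ⟨m, hm, h2, h1⟩
        refine ⟨m - j, by omega, ?_, ?_⟩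
        · have := (ih2 (m - j)).mp; rw [show m - j + j = m by omega] at this
          exact this h2
        · intro l hl1 hl2
          exact (ih1 l).mp (h1 (l + j) (by omega) (by omega))
      · rintro ⟨m, hm, h2, h1⟩
        refine ⟨m + j, by omega, (ih2 m).mpr h2, ?_⟩
        intro l hl1 hl2
        have := (ih1 (l - j)).mpr (h1 (l - j) (by omega) (by omega))
        rwa [show l - j + j = l by omega] at this
  | know ψ ih =>
      intro i; simp only [KLTL.satW, KLTL.sat, Set.mem_singleton_iff,
        forall_eq, true_implies] at *
      exact ih i

/-- K-free formulas have word semantics: `sat` does not depend on `R` or `sim`. -/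
lemma sat_noknow {A : Type} {ψ : KLTL P} (h : ψ.NoKnow) (lab : A → Set P)
    (sim : ℕ → (ℕ → A) → (ℕ → A) → Prop) (R : Set (ℕ → A)) (ρ : ℕ → A) :
    ∀ i, KLTL.sat lab sim R ψ ρ i ↔ KLTL.satW ψ (fun n => lab (ρ n)) i := by
  induction h with
  | atom p => intro i; simp [KLTL.satW, KLTL.sat]
  | not h ih => intro i; simp only [KLTL.satW, KLTL.sat] at *; rw [ih i]
  | and h1 h2 ih1 ih2 =>
      intro i; simp only [KLTL.satW, KLTL.sat] at *; rw [ih1 i, ih2 i]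
  | or h1 h2 ih1 ih2 =>
      intro i; simp only [KLTL.satW, KLTL.sat] at *; rw [ih1 i, ih2 i]
  | next h ih => intro i; simp only [KLTL.satW, KLTL.sat] at *; rw [ih (i + 1)]
  | always h ih =>
      intro i; simp only [KLTL.satW, KLTL.sat] at *
      exact forall_congr' fun m => imp_congr Iff.rfl (ih m)
  | untl h1 h2 ih1 ih2 =>
      intro i; simp only [KLTL.satW, KLTL.sat] at *
      refine exists_congr fun m => and_congr Iff.rfl (and_congr (ih2 m) ?_)
      exact forall_congr' fun l => imp_congr Iff.rfl (imp_congr Iff.rfl (ih1 l))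

/-- Formulas in which negation is only applied to atoms from `P` (and knowledge
subformulas occur only positively). -/
inductive GoodK {P 𝕂 : Type} : KLTL (P ⊕ 𝕂) → Prop
  | atom (p) : GoodK (.atom p)
  | natom (p : P) : GoodK (.not (.atom (Sum.inl p)))
  | and {φ ψ} : GoodK φ → GoodK ψ → GoodK (.and φ ψ)
  | or {φ ψ} : GoodK φ → GoodK ψ → GoodK (.or φ ψ)
  | next {φ} : GoodK φ → GoodK (.next φ)
  | always {φ} : GoodK φ → GoodK (.always φ)
  | untl {φ ψ} : GoodK φ → GoodK ψ → GoodK (.untl φ ψ)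
  | know {φ} : GoodK φ → GoodK (.know φ)

lemma goodK_map {φ : KLTL P} (h : φ.IsPositive) :
    GoodK (𝕂 := 𝕂) (φ.map Sum.inl) := by
  induction h with
  | atom p => exact GoodK.atom _
  | natom p => exact GoodK.natom _
  | and _ _ ih1 ih2 => exact GoodK.and ih1 ih2
  | or _ _ ih1 ih2 => exact GoodK.or ih1 ih2
  | next _ ih => exact GoodK.next ih
  | always _ ih => exact GoodK.always ih
  | untl _ _ ih1 ih2 => exact GoodK.untl ih1 ih2
  | know _ ih => exact GoodK.know ih

lemma goodK_innerRepl {name : 𝕂 → KLTL (P ⊕ 𝕂)} {ψ ψ' : KLTL (P ⊕ 𝕂)}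
    (h : InnerRepl name ψ ψ') (hg : GoodK ψ) : GoodK ψ' := by
  induction h with
  | atom p => exact GoodK.atom _
  | not h ih =>
      cases hg with
      | natom p => cases h; exact GoodK.natom _
  | and h1 h2 ih1 ih2 => cases hg with | and g1 g2 => exact GoodK.and (ih1 g1) (ih2 g2)
  | or h1 h2 ih1 ih2 => cases hg with | or g1 g2 => exact GoodK.or (ih1 g1) (ih2 g2)
  | next h ih => cases hg with | next g => exact GoodK.next (ih g)
  | always h ih => cases hg with | always g => exact GoodK.always (ih g)
  | untl h1 h2 ih1 ih2 => cases hg with | untl g1 g2 => exact GoodK.untl (ih1 g1) (ih2 g2)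
  | knowInner hno hname => exact GoodK.atom _
  | knowOuter hno h ih => cases hg with | know g => exact GoodK.know (ih g)

lemma not_subf_inr_map (k : 𝕂) :
    ∀ φ : KLTL P, ¬ KLTL.Subf (.atom (Sum.inr k)) (φ.map Sum.inl) := by
  intro φ
  induction φ with
  | atom p => intro h; simp [KLTL.map] at h; cases h
  | not φ ih => intro h; simp only [KLTL.map] at h; cases h with
      | not h => exact ih h
  | and φ ψ ih1 ih2 => intro h; simp only [KLTL.map] at h; cases h with
      | andL h => exact ih1 h
      | andR h => exact ih2 h
  | or φ ψ ih1 ih2 => intro h; simp only [KLTL.map] at h; cases h with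
      | orL h => exact ih1 h
      | orR h => exact ih2 h
  | next φ ih => intro h; simp only [KLTL.map] at h; cases h with
      | next h => exact ih h
  | always φ ih => intro h; simp only [KLTL.map] at h; cases h with
      | always h => exact ih h
  | untl φ ψ ih1 ih2 => intro h; simp only [KLTL.map] at h; cases h with
      | untlL h => exact ih1 h
      | untlR h => exact ih2 h
  | know φ ih => intro h; simp only [KLTL.map] at h; cases h with
      | know h => exact ih h

lemma innerRepl_subf {name : 𝕂 → KLTL (P ⊕ 𝕂)} {ψ ψ' : KLTL (P ⊕ 𝕂)}
    (h : InnerRepl name ψ ψ') (k : 𝕂) (hs : KLTL.Subf (.atom (Sum.inr k)) ψ') :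
    KLTL.Subf (.atom (Sum.inr k)) ψ ∨ (name k).NoKnow := by
  induction h with
  | atom p => exact Or.inl hs
  | not h ih =>
      cases hs with
      | not hs => rcases ih hs with h' | h'
                  · exact Or.inl (Subf.not h')
                  · exact Or.inr h'
  | and h1 h2 ih1 ih2 =>
      cases hs with
      | andL hs => rcases ih1 hs with h' | h'
                   · exact Or.inl (Subf.andL h')
                   · exact Or.inr h'
      | andR hs => rcases ih2 hs with h' | h'
                   · exact Or.inl (Subf.andR h')
                   · exact Or.inr h'
  | or h1 h2 ih1 ih2 =>
      cases hs with
      | orL hs => rcases ih1 hs with h' | h'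
                  · exact Or.inl (Subf.orL h')
                  · exact Or.inr h'
      | orR hs => rcases ih2 hs with h' | h'
                  · exact Or.inl (Subf.orR h')
                  · exact Or.inr h'
  | next h ih =>
      cases hs with
      | next hs => rcases ih hs with h' | h'
                   · exact Or.inl (Subf.next h')
                   · exact Or.inr h'
  | always h ih =>
      cases hs with
      | always hs => rcases ih hs with h' | h'
                     · exact Or.inl (Subf.always h')
                     · exact Or.inr h'
  | untl h1 h2 ih1 ih2 =>
      cases hs with
      | untlL hs => rcases ih1 hs with h' | h'
                    · exact Or.inl (Subf.untlL h')
                    · exact Or.inr h'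
      | untlR hs => rcases ih2 hs with h' | h'
                    · exact Or.inl (Subf.untlR h')
                    · exact Or.inr h'
  | knowInner hno hname =>
      cases hs
      exact Or.inr (hname ▸ hno)
  | knowOuter hno h ih =>
      cases hs with
      | know hs => rcases ih hs with h' | h'
                   · exact Or.inl (Subf.know h')
                   · exact Or.inr h'

end AuxProof
section Aux2

open KLTL

variable {P σ1 σ2 S 𝕂 QW : Type}

/-- Replacing the fresh atoms `k_γ` back by `K γ` preserves satisfaction,
provided each fresh atom that holds somewhere indeed certifies knowledge. -/
lemma innerRepl_esat_back (M : EnvModel P σ1 σ2 S)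
    {name : 𝕂 → KLTL (P ⊕ 𝕂)} (R : Set (ℕ → S × Set 𝕂))
    {ψ ψ' : KLTL (P ⊕ 𝕂)} (h : InnerRepl name ψ ψ') :
    GoodK ψ →
    (∀ k, KLTL.Subf (.atom (Sum.inr k)) ψ' → ∀ ρ ∈ R, ∀ j,
        Sum.inr k ∈ M.elabP (ρ j) → M.esat R (.know (name k)) ρ j) →
    ∀ ρ ∈ R, ∀ i, M.esat R ψ' ρ i → M.esat R ψ ρ i := by
  induction h with
  | atom p => exact fun _ _ ρ _ i hs => hs
  | not h ih =>
      intro hg H ρ hρ i hs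
      cases hg with
      | natom p => cases h; exact hs
  | and h1 h2 ih1 ih2 =>
      intro hg H ρ hρ i hs
      cases hg with
      | and g1 g2 =>
          exact ⟨ih1 g1 (fun k hk => H k (Subf.andL hk)) ρ hρ i hs.1,
                 ih2 g2 (fun k hk => H k (Subf.andR hk)) ρ hρ i hs.2⟩
  | or h1 h2 ih1 ih2 =>
      intro hg H ρ hρ i hs
      cases hg with
      | or g1 g2 =>
          rcases hs with hs | hs
          · exact Or.inl (ih1 g1 (fun k hk => H k (Subf.orL hk)) ρ hρ i hs)
          · exact Or.inr (ih2 g2 (fun k hk => H k (Subf.orR hk)) ρ hρ i hs)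
  | next h ih =>
      intro hg H ρ hρ i hs
      cases hg with
      | next g => exact ih g (fun k hk => H k (Subf.next hk)) ρ hρ (i + 1) hs
  | always h ih =>
      intro hg H ρ hρ i hs
      cases hg with
      | always g =>
          intro m hm
          exact ih g (fun k hk => H k (Subf.always hk)) ρ hρ m (hs m hm)
  | untl h1 h2 ih1 ih2 =>
      intro hg H ρ hρ i hs
      cases hg with
      | untl g1 g2 =>
          obtain ⟨m, hm, h2', h1'⟩ := hs
          exact ⟨m, hm, ih2 g2 (fun k hk => H k (Subf.untlR hk)) ρ hρ m h2',
            fun l hl1 hl2 =>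
              ih1 g1 (fun k hk => H k (Subf.untlL hk)) ρ hρ l (h1' l hl1 hl2)⟩
  | @knowInner γ k hno hname =>
      intro hg H ρ hρ i hs
      have := H k (Subf.refl _) ρ hρ i hs
      rw [hname] at this
      exact this
  | @knowOuter γ γ' hno h ih =>
      intro hg H ρ hρ i hs
      cases hg with
      | know g =>
          intro ρ' hρ' hsim
          exact ih g (fun k hk => H k (Subf.know hk)) ρ' hρ' i (hs ρ' hρ' hsim)

/-- Over a labelling that never contains fresh atoms, replacing `K γ` back for
`k_γ` preserves satisfaction (the `k_γ`-hypotheses are vacuous). -/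
lemma innerRepl_sat_noInr {A : Type} {name : 𝕂 → KLTL (P ⊕ 𝕂)}
    (lab0 : A → Set (P ⊕ 𝕂)) (sim : ℕ → (ℕ → A) → (ℕ → A) → Prop)
    (R : Set (ℕ → A)) (hlab : ∀ x k, Sum.inr k ∉ lab0 x)
    {ψ ψ' : KLTL (P ⊕ 𝕂)} (h : InnerRepl name ψ ψ') :
    GoodK ψ → ∀ ρ i, KLTL.sat lab0 sim R ψ' ρ i → KLTL.sat lab0 sim R ψ ρ i := by
  induction h with
  | atom p => exact fun _ ρ i hs => hs
  | not h ih =>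
      intro hg ρ i hs
      cases hg with
      | natom p => cases h; exact hs
  | and h1 h2 ih1 ih2 =>
      intro hg ρ i hs
      cases hg with
      | and g1 g2 => exact ⟨ih1 g1 ρ i hs.1, ih2 g2 ρ i hs.2⟩
  | or h1 h2 ih1 ih2 =>
      intro hg ρ i hs
      cases hg with
      | or g1 g2 =>
          rcases hs with hs | hs
          · exact Or.inl (ih1 g1 ρ i hs)
          · exact Or.inr (ih2 g2 ρ i hs)
  | next h ih =>
      intro hg ρ i hs
      cases hg with
      | next g => exact ih g ρ (i + 1) hs
  | always h ih =>
      intro hg ρ i hs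
      cases hg with
      | always g => exact fun m hm => ih g ρ m (hs m hm)
  | untl h1 h2 ih1 ih2 =>
      intro hg ρ i hs
      cases hg with
      | untl g1 g2 =>
          obtain ⟨m, hm, h2', h1'⟩ := hs
          exact ⟨m, hm, ih2 g2 ρ m h2', fun l hl1 hl2 => ih1 g1 ρ l (h1' l hl1 hl2)⟩
  | @knowInner γ k hno hname =>
      intro hg ρ i hs
      exact absurd hs (hlab _ _)
  | @knowOuter γ γ' hno h ih =>
      intro hg ρ i hs
      cases hg with
      | know g => exact fun ρ' hρ' hsim => ih g ρ' i (hs ρ' hρ' hsim)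

/-- Monotonicity of satisfaction of `GoodK` formulas under enlarging the
labelling by fresh atoms. -/
lemma sat_goodK_mono {A : Type} (lab0 lab1 : A → Set (P ⊕ 𝕂))
    (sim : ℕ → (ℕ → A) → (ℕ → A) → Prop) (R : Set (ℕ → A))
    (hsub : ∀ x, lab0 x ⊆ lab1 x)
    (hinl : ∀ x (p : P), Sum.inl p ∈ lab1 x → Sum.inl p ∈ lab0 x)
    {ψ : KLTL (P ⊕ 𝕂)} (hg : GoodK ψ) :
    ∀ ρ i, KLTL.sat lab0 sim R ψ ρ i → KLTL.sat lab1 sim R ψ ρ i := by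
  induction hg with
  | atom p => exact fun ρ i hs => hsub _ hs
  | natom p => exact fun ρ i hs hc => hs (hinl _ _ hc)
  | and g1 g2 ih1 ih2 => exact fun ρ i hs => ⟨ih1 ρ i hs.1, ih2 ρ i hs.2⟩
  | or g1 g2 ih1 ih2 =>
      intro ρ i hs
      rcases hs with hs | hs
      · exact Or.inl (ih1 ρ i hs)
      · exact Or.inr (ih2 ρ i hs)
  | next g ih => exact fun ρ i hs => ih ρ (i + 1) hs
  | always g ih => exact fun ρ i hs m hm => ih ρ m (hs m hm)
  | untl g1 g2 ih1 ih2 =>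
      intro ρ i hs
      obtain ⟨m, hm, h2', h1'⟩ := hs
      exact ⟨m, hm, ih2 ρ m h2', fun l hl1 hl2 => ih1 ρ l (h1' l hl1 hl2)⟩
  | know g ih => exact fun ρ i hs ρ' hρ' hsim => ih ρ' i (hs ρ' hρ' hsim)

/-- Membership in the extended LTL-to-UCT transition function. -/
lemma mem_eDelta_some (M : EnvModel P σ1 σ2 S) (W : UCW (Set (P ⊕ 𝕂)) QW)
    {q q' : QW} {I : Set S} (aK : σ1 × Set 𝕂) (o : M.Obs) {s : S}
    (hs : s ∈ I) (hq' : q' ∈ W.delta q (M.elabE s aK.2))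
    {s2 : S} (hs2o : s2 ∈ o.val) (hs2 : ∃ a2, M.trans s aK.1 a2 s2) :
    some (q', M.post aK.1 (M.eIqq W aK.2 I q q') o.val) ∈
      M.eDelta W (some (q, I)) aK o := by
  have hne : M.post aK.1 I o.val ≠ ∅ := by
    intro hemp
    have hmem : s2 ∈ M.post aK.1 I o.val := ⟨hs2o, hs2.choose, s, hs, hs2.choose_spec⟩
    rw [hemp] at hmem
    exact hmem
  simp only [EnvModel.eDelta]
  rw [if_neg hne]
  exact ⟨q', ⟨s, hs, hq'⟩, rfl⟩

/-- Given a run of the word automaton along the trace of a compatible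
e-execution, there is a matching run of the information sets. -/
lemma tail_run (M : EnvModel P σ1 σ2 S) (W : UCW (Set (P ⊕ 𝕂)) QW)
    (t : List M.Obs → σ1 × Set 𝕂) (ds : ℕ → M.Obs) (ρ : ℕ → S × Set 𝕂)
    (hρ : ρ ∈ M.branchExecE t ds) (j : ℕ) (r : ℕ → QW) (I0 : Set S)
    (h0 : (ρ j).1 ∈ I0)
    (hr : ∀ n, r (n + 1) ∈ W.delta (r n) (M.elabP (ρ (j + n)))) :
    ∃ J : ℕ → Set S, J 0 = I0 ∧ (∀ n, (ρ (j + n)).1 ∈ J n) ∧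
      ∀ n, some (r (n + 1), J (n + 1)) ∈
        M.eDelta W (some (r n, J n)) (t (prefixOf ds (j + n))) (ds (j + n)) := by
  obtain ⟨hexec, hobs, htr, hK⟩ := hρ
  let J : ℕ → Set S := fun n => Nat.rec I0
    (fun n Jn => M.post (t (prefixOf ds (j + n))).1
      (M.eIqq W (t (prefixOf ds (j + n))).2 Jn (r n) (r (n + 1))) (ds (j + n)).val) n
  have hJ0 : J 0 = I0 := rfl
  have hJsucc : ∀ n, J (n + 1) = M.post (t (prefixOf ds (j + n))).1
      (M.eIqq W (t (prefixOf ds (j + n))).2 (J n) (r n) (r (n + 1)))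
      (ds (j + n)).val := fun n => rfl
  have hWtr : ∀ n, r (n + 1) ∈ W.delta (r n)
      (M.elabE (ρ (j + n)).1 (t (prefixOf ds (j + n))).2) := by
    intro n
    have h := hr n
    have hKe : M.elabP (ρ (j + n)) =
        M.elabE (ρ (j + n)).1 (t (prefixOf ds (j + n))).2 := by
      show M.elabE (ρ (j + n)).1 (ρ (j + n)).2 = _
      rw [hK (j + n)]
    rwa [hKe] at h
  have hobs' : ∀ n, (ρ (j + n + 1)).1 ∈ (ds (j + n)).val := by
    intro n
    rw [← hobs (j + n)]
    exact rfl
  have hmem : ∀ n, (ρ (j + n)).1 ∈ J n := by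
    intro n
    induction n with
    | zero => exact h0
    | succ n ih =>
        rw [hJsucc n]
        refine ⟨hobs' n, ?_⟩
        obtain ⟨b, hb⟩ := htr (j + n)
        exact ⟨b, (ρ (j + n)).1, ⟨ih, hWtr n⟩, hb⟩
  refine ⟨J, hJ0, hmem, ?_⟩
  intro n
  rw [hJsucc n]
  refine mem_eDelta_some M W _ _ (hmem n) (hWtr n) (hobs' n) ?_
  obtain ⟨b, hb⟩ := htr (j + n)
  exact ⟨b, hb⟩

/-- Structural properties of the chain `T^d, …, T^0`. -/
lemma Ts_props {M : EnvModel P σ1 σ2 S} {C : KChain M 𝕂 QW} {φ : KLTL P}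
    (hC : C.Wf φ) :
    ∀ i ≤ C.d,
      (C.Ts i).init = {x | ∃ q0 ∈ C.inits, x = some (q0, M.S0)} ∧
      (C.Ts i).final = {x | ∃ q I, q ∈ C.W.final ∧ x = some (q, I)} ∧
      (∀ q I aK o, M.eDelta C.W (some (q, I)) aK o ⊆
        (C.Ts i).delta (some (q, I)) aK o) := by
  have key : ∀ n i, i + n = C.d →
      (C.Ts i).init = {x | ∃ q0 ∈ C.inits, x = some (q0, M.S0)} ∧
      (C.Ts i).final = {x | ∃ q I, q ∈ C.W.final ∧ x = some (q, I)} ∧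
      (∀ q I aK o, M.eDelta C.W (some (q, I)) aK o ⊆
        (C.Ts i).delta (some (q, I)) aK o) := by
    intro n
    induction n with
    | zero =>
        intro i hi
        have hieq : i = C.d := by omega
        subst hieq
        rw [hC.hTd]
        exact ⟨rfl, rfl, fun q I aK o => subset_rfl⟩
    | succ n ih =>
        intro i hi
        have hlt : i < C.d := by omega
        obtain ⟨e1, e2, e3, e4⟩ := hC.hTstep i hlt
        obtain ⟨g1, g2, g3⟩ := ih (i + 1) (by omega)
        refine ⟨by rw [e1, g1], by rw [e2, g2], ?_⟩
        intro q I aK o x hx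
        rw [e4]
        exact Set.mem_union_left _ (g3 q I aK o hx)
  intro i hi
  exact key (C.d - i) i (by omega)

/-- A tree accepted by `T^i` is accepted by `T^{i+1}`. -/
lemma Luc_mono {M : EnvModel P σ1 σ2 S} {C : KChain M 𝕂 QW} {φ : KLTL P}
    (hC : C.Wf φ) : ∀ i < C.d, (C.Ts i).Luc ⊆ (C.Ts (i + 1)).Luc := by
  intro i hlt t ht q ds h0 hstep
  obtain ⟨e1, e2, e3, e4⟩ := hC.hTstep i hlt
  have hfin := ht q ds (by rw [e1]; exact h0) ?_
  · rwa [e2] at hfin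
  intro m
  have hm := hstep m
  cases hq : q m with
  | none =>
      rw [hq] at hm
      rw [e3]
      exact hm
  | some x =>
      obtain ⟨qq, I⟩ := x
      rw [hq] at hm
      rw [e4]
      exact Set.mem_union_left _ hm

lemma goodK_phis {M : EnvModel P σ1 σ2 S} {C : KChain M 𝕂 QW} {φ : KLTL P}
    (hC : C.Wf φ) (hφ : φ.IsPositive) : ∀ m ≤ C.d, GoodK (C.φs m) := by
  intro m
  induction m with
  | zero => intro _; rw [hC.hφ0]; exact goodK_map hφ
  | succ m ih =>
      intro hm
      exact goodK_innerRepl (hC.hstep m (by omega)) (ih (by omega))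

lemma name_noknow_phis {M : EnvModel P σ1 σ2 S} {C : KChain M 𝕂 QW} {φ : KLTL P}
    (hC : C.Wf φ) :
    ∀ m ≤ C.d, ∀ k, KLTL.Subf (.atom (Sum.inr k)) (C.φs m) → (C.name k).NoKnow := by
  intro m
  induction m with
  | zero =>
      intro _ k hs
      rw [hC.hφ0] at hs
      exact absurd hs (not_subf_inr_map k φ)
  | succ m ih =>
      intro hm k hs
      rcases innerRepl_subf (hC.hstep m (by omega)) k hs with h | h
      · exact ih (by omega) k h
      · exact h

end Aux2

/-! ### STATEMENT 17
For every `i ∈ {0,…,d}`, every tree `T ∈ L_uc(T^i)`, every branch `π` of `T`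
and every e-execution `ρ ∈ R⟨π⟩`: `R⟨π⟩, ρ, 0 ⊨ φ^i`. -/
theorem Ti_branches_satisfy
    {P σ1 σ2 S 𝕂 QW : Type} [Fintype P] [Fintype σ1] [Fintype σ2] [Fintype S]
    [Fintype 𝕂]
    (M : EnvModel P σ1 σ2 S) (hdf : M.DeadlockFree) (hsc : M.SysComplete)
    (φ : KLTL P) (hφ : φ.IsPositive)
    (C : KChain M 𝕂 QW) (hC : C.Wf φ) :
    ∀ i ≤ C.d, ∀ t ∈ (C.Ts i).Luc, ∀ ds : ℕ → M.Obs,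
      ∀ ρ ∈ M.branchExecE t ds, M.esat (M.branchExecE t ds) (C.φs i) ρ 0 := by
  classical
  have props := Ts_props hC
  by_cases hinits : C.inits = ∅
  · -- degenerate case: `T^d` has no initial state, hence `φ^d` is valid
    have hvalid : ∀ w : ℕ → Set (P ⊕ 𝕂), KLTL.satW (C.φs C.d) w 0 := by
      intro w
      have hw : w ∈ C.W.LucFrom C.inits := by
        intro q hq _
        rw [hinits] at hq
        exact absurd hq (Set.notMem_empty _)
      rw [hC.hWd] at hw
      exact hw
    intro i hi t ht ds ρ hρ
    have hnoinr : ∀ (x : S × Set 𝕂) (k : 𝕂),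
        Sum.inr k ∉ ((fun x : S × Set 𝕂 => Sum.inl '' M.lab x.1) x) := by
      rintro x k ⟨p, _, hp⟩
      exact Sum.inl_ne_inr hp
    have key : ∀ n m, m + n = C.d →
        KLTL.sat (fun x : S × Set 𝕂 => Sum.inl '' M.lab x.1) M.esim
          (M.branchExecE t ds) (C.φs m) ρ 0 := by
      intro n
      induction n with
      | zero =>
          intro m hm
          have hmeq : m = C.d := by omega
          subst hmeq
          rw [sat_noknow hC.hLTL]
          exact hvalid _
      | succ n ih =>
          intro m hm
          exact innerRepl_sat_noInr _ M.esim _ hnoinr (hC.hstep m (by omega))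
            (goodK_phis hC hφ m (by omega)) ρ 0 (ih (m + 1) (by omega))
    refine sat_goodK_mono _ M.elabP M.esim _ ?_ ?_ (goodK_phis hC hφ i hi) ρ 0
      (key (C.d - i) i (by omega))
    · intro x y hy
      exact Set.mem_union_left _ hy
    · rintro x p (⟨p', hp', he⟩ | ⟨k, hk, he⟩)
      · exact ⟨p', hp', he⟩
      · exact absurd he (by simp)
  · -- main case: `inits ≠ ∅`
    obtain ⟨q0, hq0⟩ := Set.nonempty_iff_ne_empty.mpr hinits
    have key : ∀ n i, i + n = C.d → ∀ t ∈ (C.Ts i).Luc, ∀ ds : ℕ → M.Obs,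
        ∀ ρ ∈ M.branchExecE t ds, M.esat (M.branchExecE t ds) (C.φs i) ρ 0 := by
      intro n
      induction n with
      | zero =>
          intro i hieq t ht ds ρ hρ
          have hieq' : i = C.d := by omega
          subst hieq'
          have hms : (fun n => M.elabP (ρ n)) ∈ C.W.LucFrom C.inits := by
            intro r hr0 hrt
            obtain ⟨J, hJ0, hJmem, hJtr⟩ := tail_run M C.W t ds ρ hρ 0 r M.S0
              hρ.1.1 (fun n => by simpa using hrt n)
            have hfin := ht (fun m => some (r m, J m)) ds
              (by rw [(props C.d le_rfl).1]
                  exact ⟨r 0, hr0, by show some (r 0, J 0) = _; rw [hJ0]⟩)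
              (by intro m
                  have h := hJtr m
                  simp only [Nat.zero_add] at h
                  exact (props C.d le_rfl).2.2 _ _ _ _ h)
            refine Set.Finite.subset hfin ?_
            intro m hm
            show some (r m, J m) ∈ (C.Ts C.d).final
            rw [(props C.d le_rfl).2.1]
            exact ⟨r m, J m, hm, rfl⟩
          rw [hC.hWd] at hms
          exact (sat_noknow hC.hLTL M.elabP M.esim (M.branchExecE t ds) ρ 0).mpr hms
      | succ n ihn =>
          intro i hieq t ht ds ρ hρ
          have hlt : i < C.d := by omega
          have hsat' := ihn (i + 1) (by omega) t (Luc_mono hC i hlt ht) ds ρ hρ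
          refine innerRepl_esat_back M (M.branchExecE t ds) (hC.hstep i hlt)
            (goodK_phis hC hφ i (by omega)) ?_ ρ hρ 0 hsat'
          intro k hsub ρ' hρ' j hk
          have hk2 : k ∈ (ρ' j).2 := by
            rcases hk with ⟨p, _, hp⟩ | ⟨k', hk', he⟩
            · exact absurd hp Sum.inl_ne_inr
            · injection he with he'
              exact he' ▸ hk'
          have kK : k ∈ (t (prefixOf ds j)).2 := by
            rw [← hρ'.2.2.2 j]
            exact hk2
          intro ρ'' hρ'' hsim
          have hnk : (C.name k).NoKnow := name_noknow_phis hC (i + 1) (by omega) k hsub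
          refine (sat_noknow hnk M.elabP M.esim (M.branchExecE t ds) ρ'' j).mpr ?_
          by_contra hcon
          have hcon0 : ¬ KLTL.satW (C.name k) (fun n => M.elabP (ρ'' (n + j))) 0 := by
            intro hc
            refine hcon ?_
            have h := (satW_shift (C.name k) (fun n => M.elabP (ρ'' n)) j 0).mpr hc
            simpa using h
          have hnotin : (fun n => M.elabP (ρ'' (n + j))) ∉ C.W.LucFrom {C.initγ k} := by
            rw [hC.hWγ k]
            exact hcon0
          simp only [UCW.LucFrom, Set.mem_setOf_eq, Set.mem_singleton_iff,
            not_forall, Classical.not_imp] at hnotin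
          obtain ⟨r, hr0, hrt, hrfin⟩ := hnotin
          have hrt' : ∀ n, r (n + 1) ∈ C.W.delta (r n) (M.elabP (ρ'' (j + n))) := by
            intro n
            have h := hrt n
            rwa [Nat.add_comm n j] at h
          -- the anchor run of `T^i` along `ρ''`
          let rm : ℕ → QW := fun n => Nat.rec q0
            (fun n q => Classical.choose (hC.hWcomplete q (M.elabP (ρ'' n)))) n
          have hrmtr : ∀ n, rm (n + 1) ∈ C.W.delta (rm n) (M.elabP (ρ'' n)) :=
            fun n => Classical.choose_spec (hC.hWcomplete (rm n) (M.elabP (ρ'' n)))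
          obtain ⟨J, hJ0, hJmem, hJtr⟩ := tail_run M C.W t ds ρ'' hρ'' 0 rm M.S0
            hρ''.1.1 (fun n => by simpa using hrmtr n)
          have hJmemj : (ρ'' j).1 ∈ J j := by simpa using hJmem j
          obtain ⟨J', hJ'0, hJ'mem, hJ'tr⟩ := tail_run M C.W t ds ρ'' hρ'' j r (J j)
            hJmemj hrt'
          -- the combined run
          let X : ℕ → Option (QW × Set S) := fun m =>
            if m ≤ j then some (rm m, J m) else some (r (m - j), J' (m - j))
          have hXle : ∀ m, m ≤ j → X m = some (rm m, J m) := by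
            intro m hm
            show (if m ≤ j then _ else _) = _
            rw [if_pos hm]
          have hXgt : ∀ m, j < m → X m = some (r (m - j), J' (m - j)) := by
            intro m hm
            show (if m ≤ j then _ else _) = _
            rw [if_neg (by omega)]
          have hinit : X 0 ∈ (C.Ts i).init := by
            rw [(props i (by omega)).1]
            refine ⟨q0, hq0, ?_⟩
            rw [hXle 0 (Nat.zero_le j), hJ0]
            rfl
          have htrans : ∀ m, X (m + 1) ∈ (C.Ts i).delta (X m)
              (t (prefixOf ds m)) (ds m) := by
            intro m
            rcases lt_trichotomy m j with hmj | hmj | hmj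
            · rw [hXle m (by omega), hXle (m + 1) (by omega)]
              have h := hJtr m
              simp only [Nat.zero_add] at h
              exact (props i (by omega)).2.2 _ _ _ _ h
            · subst hmj
              rw [hXle m le_rfl, hXgt (m + 1) (by omega),
                show m + 1 - m = 1 by omega]
              obtain ⟨e1', e2', e3', e4'⟩ := hC.hTstep i hlt
              rw [e4' (rm m) (J m) (t (prefixOf ds m)) (ds m)]
              refine Set.mem_union_right _ ?_
              refine Set.mem_biUnion (show k ∈ {k' : 𝕂 | k' ∈ (t (prefixOf ds m)).2 ∧
                KLTL.Subf (.atom (Sum.inr k')) (C.φs (i + 1))} from ⟨kK, hsub⟩) ?_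
              have h10 := hJ'tr 0
              rw [hJ'0, hr0] at h10
              exact h10
            · obtain ⟨l, rfl⟩ : ∃ l, m = j + (l + 1) := ⟨m - j - 1, by omega⟩
              rw [hXgt (j + (l + 1)) (by omega), hXgt (j + (l + 1) + 1) (by omega),
                show j + (l + 1) - j = l + 1 by omega,
                show j + (l + 1) + 1 - j = l + 2 by omega]
              have h := hJ'tr (l + 1)
              exact (props i (by omega)).2.2 _ _ _ _ h
          have hfin := ht X ds hinit htrans
          apply hrfin
          have hsubset : (fun n => j + n) '' ({n | r n ∈ C.W.final} \ {0}) ⊆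
              {m | X m ∈ (C.Ts i).final} := by
            rintro m ⟨n, ⟨hnf, hn0⟩, rfl⟩
            show X (j + n) ∈ (C.Ts i).final
            have hn0' : n ≠ 0 := by simpa using hn0
            rw [hXgt (j + n) (by omega), show j + n - j = n by omega,
              (props i (by omega)).2.1]
            exact ⟨r n, J' n, hnf, rfl⟩
          have himg : ((fun n => j + n) '' ({n | r n ∈ C.W.final} \ {0})).Finite :=
            hfin.subset hsubset
          have hdiff : ({n | r n ∈ C.W.final} \ {0}).Finite :=
            Set.Finite.of_finite_image himg
              (Set.injOn_of_injective (fun a b h => by omega))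
          have hun := hdiff.union (Set.finite_singleton 0)
          refine hun.subset ?_
          intro n hn
          by_cases h0 : n = 0
          · exact Or.inr (by simp [h0])
          · exact Or.inl ⟨hn, h0⟩
    intro i hi t ht ds ρ hρ
    exact key (C.d - i) i (by omega) t ht ds ρ hρ
end
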